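/- arXiv:1812.04926 — 3 statements merged into one kernel-verified Lean document; each statement's English description precedes it below -/
import Mathlib

section
/- Let n ≥ 1 and let f : Γ₊ⁿ → ℝ be increasing in each argument. Let U be an open neighborhood of 0 in ℝⁿ, let δ > 0, t₀ ∈ ℝ, and let u₁, u₂ : U × (t₀ − δ, t₀] → ℝ be functions that are twice continuously differentiable in the space variable and differentiable in time, such that for a = 1, 2 and all (x, t): the vector λ[u_a](x,t) of ascending eigenvalues of g^{-1/2} h g^{-1/2} lies in Γ₊ⁿ, where g = I + Du_a (Du_a)ᵀ and h = −D²u_a/√(1 + |Du_a|²) are evaluated at (x,t), and u_a satisfies the graph equation ∂ₜ u_a = −f(λ[u_a]) √(1 + |Du_a|²). If the function x ↦ (u₂ − u₁)(x, t₀) attains a local minimum at x = 0, then ∂ₜ(u₂ − u₁)(0, t₀) ≥ 0. -/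
open Matrix
open scoped Classical

/-- The square root of a positive semidefinite matrix, as defined in the older Mathlib
(removed since). -/
noncomputable def Matrix.PosSemidef.sqrt {n : Type*} [Fintype n] [DecidableEq n]
    {A : Matrix n n ℝ} (hA : A.PosSemidef) : Matrix n n ℝ :=
  hA.1.eigenvectorUnitary.1 * diagonal ((↑) ∘ Real.sqrt ∘ hA.1.eigenvalues) *
  (star hA.1.eigenvectorUnitary : Matrix n n ℝ)

/-- The ascending rearrangement of the eigenvalues of the symmetric matrix
`g^{-1/2} * h * g^{-1/2}`, where `g^{-1/2}` is the inverse of the positive definite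
square root of the positive definite matrix `g`.  (Junk value `0` if `g` is not
positive definite or the conjugated matrix fails to be symmetric.) -/
noncomputable def relEigAsc {n : ℕ} (g h : Matrix (Fin n) (Fin n) ℝ) : Fin n → ℝ :=
  if hg : g.PosDef then
    if hM : (hg.posSemidef.sqrt⁻¹ * h * hg.posSemidef.sqrt⁻¹).IsHermitian then
      hM.eigenvalues ∘ Tuple.sort hM.eigenvalues
    else 0
  else 0

/-- The vector of principal curvatures of the graph of `u`, expressed in terms of the
gradient vector `p = Du` and the Hessian matrix `H = D²u`: the ascending eigenvalues of
`g^{-1/2} h g^{-1/2}` with `g = I + p pᵀ` and `h = -H / √(1 + |p|²)`. -/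
noncomputable def graphLambda {n : ℕ} (p : Fin n → ℝ) (H : Matrix (Fin n) (Fin n) ℝ) :
    Fin n → ℝ :=
  relEigAsc (1 + Matrix.vecMulVec p p) ((-(Real.sqrt (1 + ∑ j, p j ^ 2))⁻¹) • H)


section AuxLemmas
open Module

variable {n : ℕ}


lemma toEuclideanLin_eigen {M : Matrix (Fin n) (Fin n) ℝ} (hM : M.IsHermitian) (k : Fin n) :
    Matrix.toEuclideanLin M (hM.eigenvectorBasis k) =
      hM.eigenvalues k • hM.eigenvectorBasis k := by
  ext i
  simpa using congrFun (hM.mulVec_eigenvectorBasis k) i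

lemma rayleigh_repr {M : Matrix (Fin n) (Fin n) ℝ} (hM : M.IsHermitian)
    (S : Finset (Fin n)) (v : EuclideanSpace ℝ (Fin n))
    (hv : v ∈ Submodule.span ℝ (Set.range fun k : ↥S =>
        (hM.eigenvectorBasis k : EuclideanSpace ℝ (Fin n)))) :
    ∃ c : ↥S → ℝ,
      (inner ℝ v v : ℝ) = ∑ k, c k ^ 2 ∧
      (inner ℝ v (Matrix.toEuclideanLin M v) : ℝ) = ∑ k : ↥S, hM.eigenvalues (k : Fin n) * c k ^ 2 := by
  obtain ⟨c, rfl⟩ := (Submodule.mem_span_range_iff_exists_fun ℝ).1 hv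
  have horth : Orthonormal ℝ fun k : ↥S => hM.eigenvectorBasis k :=
    hM.eigenvectorBasis.orthonormal.comp _ Subtype.coe_injective
  refine ⟨c, ?_, ?_⟩
  · rw [horth.inner_sum c c Finset.univ]
    simp [sq]
  · have hT : Matrix.toEuclideanLin M (∑ k : ↥S, c k • hM.eigenvectorBasis (k : Fin n)) =
        ∑ k : ↥S, (c k * hM.eigenvalues k) • hM.eigenvectorBasis (k : Fin n) := by
      rw [map_sum]
      refine Finset.sum_congr rfl fun k _ => ?_
      rw [_root_.map_smul, toEuclideanLin_eigen hM k, smul_smul]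
    rw [hT, horth.inner_sum c (fun k => c k * hM.eigenvalues k) Finset.univ]
    refine Finset.sum_congr rfl fun k _ => ?_
    simp [sq]; ring

/-- Weyl's monotonicity: if `B - A` is positive semidefinite then each ascending
eigenvalue of `A` is at most the corresponding one of `B`. -/
lemma sorted_eigenvalues_mono {A B : Matrix (Fin n) (Fin n) ℝ}
    (hA : A.IsHermitian) (hB : B.IsHermitian) (hAB : (B - A).PosSemidef) (i : Fin n) :
    (hA.eigenvalues ∘ Tuple.sort hA.eigenvalues) i ≤
      (hB.eigenvalues ∘ Tuple.sort hB.eigenvalues) i := by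
  classical
  set σ := Tuple.sort hA.eigenvalues with hσ
  set τ := Tuple.sort hB.eigenvalues with hτ
  set SA : Finset (Fin n) := (Finset.Ici i).image σ with hSA
  set SB : Finset (Fin n) := (Finset.Iic i).image τ with hSB
  set V : Submodule ℝ (EuclideanSpace ℝ (Fin n)) :=
    Submodule.span ℝ (Set.range fun k : ↥SA => (hA.eigenvectorBasis k : EuclideanSpace ℝ (Fin n))) with hV
  set W : Submodule ℝ (EuclideanSpace ℝ (Fin n)) :=
    Submodule.span ℝ (Set.range fun k : ↥SB => (hB.eigenvectorBasis k : EuclideanSpace ℝ (Fin n))) with hW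
  -- dimensions
  have hcardA : SA.card = n - i := by
    rw [hSA, Finset.card_image_of_injective _ σ.injective, Fin.card_Ici]
  have hcardB : SB.card = i + 1 := by
    rw [hSB, Finset.card_image_of_injective _ τ.injective, Fin.card_Iic]
  have hdimV : finrank ℝ V = n - i := by
    have h := finrank_span_eq_card (R := ℝ)
      ((hA.eigenvectorBasis.orthonormal.comp ((↑·) : ↥SA → Fin n)
        Subtype.coe_injective).linearIndependent)
    exact h.trans (by simp [hcardA])
  have hdimW : finrank ℝ W = i + 1 := by
    have h := finrank_span_eq_card (R := ℝ)
      ((hB.eigenvectorBasis.orthonormal.comp ((↑·) : ↥SB → Fin n)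
        Subtype.coe_injective).linearIndependent)
    exact h.trans (by simp [hcardB])
  have hsum := Submodule.finrank_sup_add_finrank_inf_eq V W
  have hle : finrank ℝ ↥(V ⊔ W) ≤ n := by
    simpa [finrank_euclideanSpace_fin] using Submodule.finrank_le (V ⊔ W)
  have hpos : 0 < finrank ℝ ↥(V ⊓ W) := by
    have hi := i.isLt
    omega
  obtain ⟨⟨v, hvmem⟩, hvne⟩ := Module.finrank_pos_iff_exists_ne_zero.1 hpos
  have hv0 : v ≠ 0 := by
    intro h; exact hvne (Subtype.ext h)
  obtain ⟨hvV, hvW⟩ := Submodule.mem_inf.1 hvmem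
  obtain ⟨c, hc1, hc2⟩ := rayleigh_repr hA SA v hvV
  obtain ⟨d, hd1, hd2⟩ := rayleigh_repr hB SB v hvW
  have hIpos : (0:ℝ) < inner ℝ v v := by
    rw [real_inner_self_eq_norm_sq]
    exact pow_pos (norm_pos_iff.2 hv0) 2
  -- lower bound for A
  have hlow : hA.eigenvalues (σ i) * (inner ℝ v v : ℝ) ≤
      (inner ℝ v (Matrix.toEuclideanLin A v) : ℝ) := by
    rw [hc1, hc2, Finset.mul_sum]
    refine Finset.sum_le_sum fun k _ => ?_
    refine mul_le_mul_of_nonneg_right ?_ (sq_nonneg _)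
    obtain ⟨j, hj, hjk⟩ := Finset.mem_image.1 k.2
    rw [← hjk]
    exact Tuple.monotone_sort hA.eigenvalues (Finset.mem_Ici.1 hj)
  have hhigh : (inner ℝ v (Matrix.toEuclideanLin B v) : ℝ) ≤
      hB.eigenvalues (τ i) * (inner ℝ v v : ℝ) := by
    rw [hd1, hd2, Finset.mul_sum]
    refine Finset.sum_le_sum fun k _ => ?_
    refine mul_le_mul_of_nonneg_right ?_ (sq_nonneg _)
    obtain ⟨j, hj, hjk⟩ := Finset.mem_image.1 k.2
    rw [← hjk]
    exact Tuple.monotone_sort hB.eigenvalues (Finset.mem_Iic.1 hj)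
  have hmid : (inner ℝ v (Matrix.toEuclideanLin A v) : ℝ) ≤
      (inner ℝ v (Matrix.toEuclideanLin B v) : ℝ) := by
    have h0 := hAB.dotProduct_mulVec_nonneg (WithLp.equiv 2 (Fin n → ℝ) v)
    have : (inner ℝ v (Matrix.toEuclideanLin (B - A) v) : ℝ) =
        dotProduct (star (WithLp.equiv 2 (Fin n → ℝ) v))
          ((B - A) *ᵥ WithLp.equiv 2 (Fin n → ℝ) v) := by
      rw [EuclideanSpace.inner_eq_star_dotProduct, dotProduct_comm]
      rfl
    have h1 : (0:ℝ) ≤ inner ℝ v (Matrix.toEuclideanLin (B - A) v) := this ▸ h0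
    have h2 : Matrix.toEuclideanLin (B - A) v =
        Matrix.toEuclideanLin B v - Matrix.toEuclideanLin A v := by
      rw [map_sub]; rfl
    rw [h2, inner_sub_right] at h1
    linarith
  have := le_of_mul_le_mul_right (by calc
    hA.eigenvalues (σ i) * (inner ℝ v v : ℝ) ≤ _ := hlow
    _ ≤ _ := hmid
    _ ≤ hB.eigenvalues (τ i) * (inner ℝ v v : ℝ) := hhigh) hIpos
  simpa using this


lemma onePlusVecMulVec_posDef (p : Fin n → ℝ) : (1 + vecMulVec p p).PosDef := by
  refine Matrix.PosDef.of_dotProduct_mulVec_pos ?_ ?_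
  · unfold Matrix.IsHermitian
    ext i j
    simp [conjTranspose_apply, vecMulVec_apply, Matrix.one_apply, mul_comm]
    rcases eq_or_ne i j with h | h
    · simp [h, mul_comm]
    · simp [h, Ne.symm h, mul_comm]
  · intro x hx
    have hmv : (1 + vecMulVec p p) *ᵥ x = x + (p ⬝ᵥ x) • p := by
      rw [add_mulVec, one_mulVec]
      congr 1
      ext i
      simp only [mulVec, vecMulVec_apply, dotProduct, Pi.smul_apply, smul_eq_mul,
        Finset.sum_mul, of_apply]
      refine Finset.sum_congr rfl fun j _ => by ring
    rw [hmv]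
    have : star x ⬝ᵥ (x + (p ⬝ᵥ x) • p) = x ⬝ᵥ x + (p ⬝ᵥ x) * (x ⬝ᵥ p) := by
      simp [dotProduct_add, dotProduct_smul, star_trivial, smul_eq_mul, mul_comm]
    rw [this]
    have h1 : 0 < x ⬝ᵥ x := by
      have : x ⬝ᵥ x = ∑ i, x i ^ 2 := by simp [dotProduct, sq]
      rw [this]
      rcases Function.ne_iff.1 hx with ⟨i, hi⟩
      exact Finset.sum_pos' (fun j _ => sq_nonneg _)
        ⟨i, Finset.mem_univ i, by
          have : x i ≠ 0 := by simpa using hi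
          positivity⟩
    have h2 : (p ⬝ᵥ x) * (x ⬝ᵥ p) = (p ⬝ᵥ x) ^ 2 := by
      rw [dotProduct_comm x p, sq]
    nlinarith [sq_nonneg (p ⬝ᵥ x)]

lemma posSemidef_smul_real {M : Matrix (Fin n) (Fin n) ℝ} (hM : M.PosSemidef) {c : ℝ}
    (hc : 0 ≤ c) : (c • M).PosSemidef := by
  refine Matrix.PosSemidef.of_dotProduct_mulVec_nonneg ?_ fun x => ?_
  · unfold Matrix.IsHermitian
    rw [conjTranspose_smul, hM.1]
    simp
  · rw [smul_mulVec, dotProduct_smul, smul_eq_mul]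
    exact mul_nonneg hc (hM.dotProduct_mulVec_nonneg x)

lemma conj_hermitian {S X : Matrix (Fin n) (Fin n) ℝ} (hS : S.IsHermitian)
    (hX : X.IsHermitian) : (S * X * S).IsHermitian := by
  unfold Matrix.IsHermitian
  rw [conjTranspose_mul, conjTranspose_mul, hS.eq, hX.eq, mul_assoc]

lemma sqrt_isHermitian_aux {A : Matrix (Fin n) (Fin n) ℝ} (hA : A.PosSemidef) :
    hA.sqrt.IsHermitian := by
  unfold Matrix.IsHermitian Matrix.PosSemidef.sqrt
  simp only [conjTranspose_mul, Unitary.coe_star, star_eq_conjTranspose,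
    conjTranspose_conjTranspose, diagonal_conjTranspose, Matrix.mul_assoc, star_trivial]

lemma graphLambda_mono (p : Fin n → ℝ) {H₁ H₂ : Matrix (Fin n) (Fin n) ℝ}
    (h₁ : H₁.IsHermitian) (h₂ : H₂.IsHermitian) (hle : (H₂ - H₁).PosSemidef) (i : Fin n) :
    graphLambda p H₂ i ≤ graphLambda p H₁ i := by
  have hg : (1 + vecMulVec p p).PosDef := onePlusVecMulVec_posDef p
  set S : Matrix (Fin n) (Fin n) ℝ := hg.posSemidef.sqrt⁻¹ with hSdef
  have hS : S.IsHermitian := (sqrt_isHermitian_aux hg.posSemidef).inv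
  set c : ℝ := -(Real.sqrt (1 + ∑ j, p j ^ 2))⁻¹ with hcdef
  have hc : 0 ≤ -c := by
    rw [hcdef, neg_neg]
    positivity
  have hherm : ∀ (H : Matrix (Fin n) (Fin n) ℝ), H.IsHermitian →
      (S * (c • H) * S).IsHermitian := by
    intro H hH
    refine conj_hermitian hS ?_
    unfold Matrix.IsHermitian
    rw [conjTranspose_smul, hH.eq]
    simp
  have hM₁ : (S * (c • H₁) * S).IsHermitian := hherm H₁ h₁
  have hM₂ : (S * (c • H₂) * S).IsHermitian := hherm H₂ h₂
  have hdiff : (S * (c • H₁) * S - S * (c • H₂) * S).PosSemidef := by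
    have heq : S * (c • H₁) * S - S * (c • H₂) * S = S * ((-c) • (H₂ - H₁)) * Sᴴ := by
      have hsm : (-c) • (H₂ - H₁) = c • H₁ - c • H₂ := by module
      rw [hS.eq, hsm, Matrix.mul_sub, Matrix.sub_mul]
    rw [heq]
    exact (posSemidef_smul_real hle hc).mul_mul_conjTranspose_same S
  have key := sorted_eigenvalues_mono hM₂ hM₁ hdiff i
  have e₂ : graphLambda p H₂ = hM₂.eigenvalues ∘ Tuple.sort hM₂.eigenvalues := by
    rw [graphLambda, relEigAsc, dif_pos hg, dif_pos hM₂]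
  have e₁ : graphLambda p H₁ = hM₁.eigenvalues ∘ Tuple.sort hM₁.eigenvalues := by
    rw [graphLambda, relEigAsc, dif_pos hg, dif_pos hM₁]
  rw [e₁, e₂]
  exact key


/-- At an interior local minimum of a C²-ish function, the gradient vanishes. -/
lemma localmin_grad_zero {n : ℕ} {w : (Fin n → ℝ) → ℝ} {Dw : (Fin n → ℝ) → (Fin n → ℝ)}
    (hDw : HasFDerivAt w
      (∑ j, Dw 0 j • (ContinuousLinearMap.proj j : (Fin n → ℝ) →L[ℝ] ℝ)) 0)
    (hmin : IsLocalMin w 0) : Dw 0 = 0 := by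
  have h := hmin.hasFDerivAt_eq_zero hDw
  funext i
  have := congrArg (fun L : (Fin n → ℝ) →L[ℝ] ℝ => L (Pi.single i 1)) h
  simpa [ContinuousLinearMap.sum_apply, Pi.single_apply, Finset.sum_ite_eq'] using this

lemma localmin_hessian_nonneg {n : ℕ} {w : (Fin n → ℝ) → ℝ}
    {Dw : (Fin n → ℝ) → (Fin n → ℝ)} {H : Matrix (Fin n) (Fin n) ℝ}
    {U : Set (Fin n → ℝ)} (hU : IsOpen U) (h0 : (0 : Fin n → ℝ) ∈ U)
    (hDw : ∀ x ∈ U, HasFDerivAt w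
      (∑ j, Dw x j • (ContinuousLinearMap.proj j : (Fin n → ℝ) →L[ℝ] ℝ)) x)
    (hD2 : HasFDerivAt Dw (LinearMap.toContinuousLinearMap H.mulVecLin) 0)
    (hmin : IsLocalMin w 0) (v : Fin n → ℝ) :
    0 ≤ v ⬝ᵥ (H *ᵥ v) := by
  classical
  have hDw0 : Dw 0 = 0 := localmin_grad_zero (hDw 0 h0) hmin
  -- the linear functional `u ↦ ∑ j, v j * u j`
  set ℓ : (Fin n → ℝ) →L[ℝ] ℝ :=
    ∑ j, v j • (ContinuousLinearMap.proj j : (Fin n → ℝ) →L[ℝ] ℝ) with hℓdef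
  have hℓ : ∀ u : Fin n → ℝ, ℓ u = ∑ j, v j * u j := by
    intro u; simp [hℓdef]
  -- the curve and the derivative candidate
  set ρ : ℝ → (Fin n → ℝ) := fun s => s • v with hρdef
  have hρ : ∀ s, HasDerivAt ρ v s := fun s => by
    simpa using (hasDerivAt_id s).smul_const v
  set g : ℝ → ℝ := fun s => ℓ (Dw (ρ s)) with hgdef
  set q : ℝ := v ⬝ᵥ (H *ᵥ v) with hqdef
  -- `g` has derivative `q` at `0`
  have hg0 : HasDerivAt g q 0 := by
    have h1 : HasFDerivAt (fun x => ℓ (Dw x))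
        (ℓ.comp (LinearMap.toContinuousLinearMap H.mulVecLin)) 0 :=
      ℓ.hasFDerivAt.comp 0 hD2
    have h1' : HasFDerivAt (fun x => ℓ (Dw x))
        (ℓ.comp (LinearMap.toContinuousLinearMap H.mulVecLin)) (ρ 0) := by
      rw [show ρ 0 = 0 from by simp [hρdef]]; exact h1
    have h2 := h1'.comp_hasDerivAt 0 (hρ 0)
    have h3 : (ℓ.comp (LinearMap.toContinuousLinearMap H.mulVecLin)) v = q := by
      simp [hℓ, hqdef, dotProduct, mulVec, Matrix.mulVecLin_apply]
    rw [← h3]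
    exact h2
  have hgzero : g 0 = 0 := by simp [hgdef, hρdef, hDw0, hℓ]
  -- φ s = w (s • v), with derivative g s wherever ρ s ∈ U
  set φ : ℝ → ℝ := fun s => w (ρ s) with hφdef
  have hφ : ∀ s, ρ s ∈ U → HasDerivAt φ (g s) s := by
    intro s hs
    have h1 := (hDw (ρ s) hs).comp_hasDerivAt s (hρ s)
    have h2 : (∑ j, Dw (ρ s) j • (ContinuousLinearMap.proj j : (Fin n → ℝ) →L[ℝ] ℝ)) v
        = g s := by
      simp [hgdef, hℓ, ContinuousLinearMap.sum_apply]
      exact Finset.sum_congr rfl fun j _ => by rw [mul_comm]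
    rw [← h2]
    exact h1
  -- main contradiction argument
  by_contra hq
  push_neg at hq
  have hqneg : q < 0 := hq
  -- eventually `g s < 0` for `s > 0` small
  have hslope : Filter.Tendsto (slope g 0) (nhdsWithin 0 {0}ᶜ) (nhds q) :=
    hasDerivAt_iff_tendsto_slope.1 hg0
  have hev1 : ∀ᶠ s in nhdsWithin 0 {0}ᶜ, slope g 0 s < 0 :=
    hslope.eventually_lt_const hqneg
  have hρ0 : ρ 0 = 0 := by simp [hρdef]
  have hρcont : Filter.Tendsto ρ (nhds 0) (nhds 0) := by
    have := (hρ 0).continuousAt.tendsto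
    rwa [hρ0] at this
  have hevU : ∀ᶠ s in nhds (0:ℝ), ρ s ∈ U := hρcont.eventually (hU.eventually_mem h0)
  have hevmin : ∀ᶠ s in nhds (0:ℝ), w 0 ≤ w (ρ s) := hρcont.eventually hmin
  have hall : ∀ᶠ s in nhdsWithin 0 {0}ᶜ,
      slope g 0 s < 0 ∧ ρ s ∈ U ∧ w 0 ≤ w (ρ s) :=
    hev1.and ((hevU.filter_mono nhdsWithin_le_nhds).and
      (hevmin.filter_mono nhdsWithin_le_nhds))
  obtain ⟨ε, hε, hball⟩ := Metric.mem_nhdsWithin_iff.1 hall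
  set s₀ : ℝ := ε / 2 with hs₀def
  have hs₀pos : 0 < s₀ := by positivity
  have hkey : ∀ s : ℝ, 0 < s → s ≤ s₀ →
      slope g 0 s < 0 ∧ ρ s ∈ U ∧ w 0 ≤ w (ρ s) := by
    intro s hs1 hs2
    refine hball ⟨?_, ?_⟩
    · rw [Metric.mem_ball, Real.dist_eq, sub_zero, abs_of_pos hs1]
      linarith
    · exact fun h => absurd h (by simpa using hs1.ne')
  have hmemU : ∀ s ∈ Set.Icc (0:ℝ) s₀, ρ s ∈ U := by
    intro s hs
    rcases eq_or_lt_of_le hs.1 with h | h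
    · rw [← h, hρ0]; exact h0
    · exact (hkey s h hs.2).2.1
  have hMVT := exists_hasDerivAt_eq_slope φ g hs₀pos
    (fun s hs => ((hφ s (hmemU s hs)).continuousAt).continuousWithinAt)
    (fun s hs => hφ s (hmemU s ⟨le_of_lt hs.1, le_of_lt hs.2⟩))
  obtain ⟨c, hc, hgc⟩ := hMVT
  have hgcneg : g c < 0 := by
    have h1 := (hkey c hc.1 (le_of_lt hc.2)).1
    rw [slope_def_field] at h1
    have : (g c - g 0) / (c - 0) < 0 := h1
    rw [hgzero, sub_zero, sub_zero] at this
    rcases div_neg_iff.1 this with ⟨_, hcneg⟩ | ⟨hg, _⟩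
    · exact absurd hc.1 (not_lt.2 hcneg.le)
    · exact hg
  have hφ0 : φ 0 = w 0 := by rw [hφdef]; simp [hρ0]
  have hφs₀ : w 0 ≤ φ s₀ := (hkey s₀ hs₀pos le_rfl).2.2
  rw [hgc] at hgcneg
  have : (0:ℝ) ≤ (φ s₀ - φ 0) / (s₀ - 0) := by
    rw [hφ0]
    apply div_nonneg (by linarith) (by linarith)
  linarith

end AuxLemmas

/-- The analytic heart of the comparison principle for Andrews' flow: if `u₁, u₂` are
graph solutions of Andrews' flow (C² in space, differentiable in time) with strictly
convex graphs, and `u₂ - u₁` at the final time `t₀` has a local minimum at `x = 0`,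
then `∂ₜ(u₂ - u₁)(0, t₀) ≥ 0`. -/
theorem comparison_pointwise {n : ℕ} (hn : 1 ≤ n)
    (f : (Fin n → ℝ) → ℝ)
    (hf : ∀ lam mu : Fin n → ℝ, (∀ i, 0 < lam i) → (∀ i, 0 < mu i) →
      (∀ i, lam i ≤ mu i) → f lam ≤ f mu)
    (U : Set (Fin n → ℝ)) (hU : IsOpen U) (h0 : (0 : Fin n → ℝ) ∈ U)
    (δ t₀ : ℝ) (hδ : 0 < δ)
    (u₁ u₂ : (Fin n → ℝ) → ℝ → ℝ)
    (Du₁ Du₂ : (Fin n → ℝ) → ℝ → (Fin n → ℝ))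
    (D2u₁ D2u₂ : (Fin n → ℝ) → ℝ → Matrix (Fin n) (Fin n) ℝ)
    (ut₁ ut₂ : (Fin n → ℝ) → ℝ → ℝ)
    -- first spatial derivatives
    (hDu₁ : ∀ x ∈ U, ∀ t ∈ Set.Ioc (t₀ - δ) t₀,
      HasFDerivAt (fun y => u₁ y t)
        (∑ j, Du₁ x t j • (ContinuousLinearMap.proj j : (Fin n → ℝ) →L[ℝ] ℝ)) x)
    (hDu₂ : ∀ x ∈ U, ∀ t ∈ Set.Ioc (t₀ - δ) t₀,
      HasFDerivAt (fun y => u₂ y t)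
        (∑ j, Du₂ x t j • (ContinuousLinearMap.proj j : (Fin n → ℝ) →L[ℝ] ℝ)) x)
    -- second spatial derivatives
    (hD2u₁ : ∀ x ∈ U, ∀ t ∈ Set.Ioc (t₀ - δ) t₀,
      HasFDerivAt (fun y => Du₁ y t)
        (LinearMap.toContinuousLinearMap (D2u₁ x t).mulVecLin) x)
    (hD2u₂ : ∀ x ∈ U, ∀ t ∈ Set.Ioc (t₀ - δ) t₀,
      HasFDerivAt (fun y => Du₂ y t)
        (LinearMap.toContinuousLinearMap (D2u₂ x t).mulVecLin) x)
    -- the second derivatives are continuous in space and symmetric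
    (hcont₁ : ∀ t ∈ Set.Ioc (t₀ - δ) t₀, ContinuousOn (fun x => D2u₁ x t) U)
    (hcont₂ : ∀ t ∈ Set.Ioc (t₀ - δ) t₀, ContinuousOn (fun x => D2u₂ x t) U)
    (hsym₁ : ∀ x ∈ U, ∀ t ∈ Set.Ioc (t₀ - δ) t₀, (D2u₁ x t).IsHermitian)
    (hsym₂ : ∀ x ∈ U, ∀ t ∈ Set.Ioc (t₀ - δ) t₀, (D2u₂ x t).IsHermitian)
    -- time derivatives
    (hut₁ : ∀ x ∈ U, ∀ t ∈ Set.Ioc (t₀ - δ) t₀,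
      HasDerivWithinAt (fun τ => u₁ x τ) (ut₁ x t) (Set.Ioc (t₀ - δ) t₀) t)
    (hut₂ : ∀ x ∈ U, ∀ t ∈ Set.Ioc (t₀ - δ) t₀,
      HasDerivWithinAt (fun τ => u₂ x τ) (ut₂ x t) (Set.Ioc (t₀ - δ) t₀) t)
    -- strict convexity: the principal curvatures lie in the positive cone
    (hlam₁ : ∀ x ∈ U, ∀ t ∈ Set.Ioc (t₀ - δ) t₀, ∀ i,
      0 < graphLambda (Du₁ x t) (D2u₁ x t) i)
    (hlam₂ : ∀ x ∈ U, ∀ t ∈ Set.Ioc (t₀ - δ) t₀, ∀ i,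
      0 < graphLambda (Du₂ x t) (D2u₂ x t) i)
    -- the graph equation of Andrews' flow
    (heq₁ : ∀ x ∈ U, ∀ t ∈ Set.Ioc (t₀ - δ) t₀,
      ut₁ x t = - f (graphLambda (Du₁ x t) (D2u₁ x t)) *
        Real.sqrt (1 + ∑ j, Du₁ x t j ^ 2))
    (heq₂ : ∀ x ∈ U, ∀ t ∈ Set.Ioc (t₀ - δ) t₀,
      ut₂ x t = - f (graphLambda (Du₂ x t) (D2u₂ x t)) *
        Real.sqrt (1 + ∑ j, Du₂ x t j ^ 2))
    -- local minimum of u₂ - u₁ at x = 0 at time t₀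
    (hmin : IsLocalMin (fun x => u₂ x t₀ - u₁ x t₀) 0) :
    0 ≤ ut₂ 0 t₀ - ut₁ 0 t₀ := by
  classical
  have ht : t₀ ∈ Set.Ioc (t₀ - δ) t₀ := ⟨by linarith, le_rfl⟩
  set w : (Fin n → ℝ) → ℝ := fun x => u₂ x t₀ - u₁ x t₀ with hwdef
  set Dw : (Fin n → ℝ) → (Fin n → ℝ) := fun x => Du₂ x t₀ - Du₁ x t₀ with hDwdef
  have hDw : ∀ x ∈ U, HasFDerivAt w
      (∑ j, Dw x j • (ContinuousLinearMap.proj j : (Fin n → ℝ) →L[ℝ] ℝ)) x := by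
    intro x hx
    have h := (hDu₂ x hx t₀ ht).sub (hDu₁ x hx t₀ ht)
    have hLeq : (∑ j, Du₂ x t₀ j • (ContinuousLinearMap.proj j : (Fin n → ℝ) →L[ℝ] ℝ)) -
        (∑ j, Du₁ x t₀ j • (ContinuousLinearMap.proj j : (Fin n → ℝ) →L[ℝ] ℝ)) =
        ∑ j, Dw x j • (ContinuousLinearMap.proj j : (Fin n → ℝ) →L[ℝ] ℝ) := by
      ext v
      simp [hDwdef, Finset.sum_sub_distrib, sub_mul]
    rwa [hLeq] at h
  -- gradient equality
  have hp : Du₂ 0 t₀ = Du₁ 0 t₀ := by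
    have h := localmin_grad_zero (hDw 0 h0) hmin
    have h' : Du₂ 0 t₀ - Du₁ 0 t₀ = 0 := h
    funext i
    have := congrFun h' i
    simp only [Pi.sub_apply, Pi.zero_apply, sub_eq_zero] at this
    exact this
  -- Hessian positivity
  set H : Matrix (Fin n) (Fin n) ℝ := D2u₂ 0 t₀ - D2u₁ 0 t₀ with hHdef
  have hD2 : HasFDerivAt Dw (LinearMap.toContinuousLinearMap H.mulVecLin) 0 := by
    have heqd : LinearMap.toContinuousLinearMap H.mulVecLin =
        LinearMap.toContinuousLinearMap (D2u₂ 0 t₀).mulVecLin -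
        LinearMap.toContinuousLinearMap (D2u₁ 0 t₀).mulVecLin := by
      ext v
      simp [hHdef, Matrix.sub_mulVec]
    rw [heqd]
    exact (hD2u₂ 0 h0 t₀ ht).sub (hD2u₁ 0 h0 t₀ ht)
  have hPSD : H.PosSemidef := by
    refine Matrix.PosSemidef.of_dotProduct_mulVec_nonneg ((hsym₂ 0 h0 t₀ ht).sub (hsym₁ 0 h0 t₀ ht)) fun x => ?_
    have := localmin_hessian_nonneg hU h0 hDw hD2 hmin x
    simpa using this
  -- compare the curvature vectors
  have hmono : ∀ i, graphLambda (Du₂ 0 t₀) (D2u₂ 0 t₀) i ≤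
      graphLambda (Du₁ 0 t₀) (D2u₁ 0 t₀) i := by
    intro i
    rw [hp]
    exact graphLambda_mono (Du₁ 0 t₀) (hsym₁ 0 h0 t₀ ht) (hsym₂ 0 h0 t₀ ht) hPSD i
  have hfle := hf _ _ (hlam₂ 0 h0 t₀ ht) (hlam₁ 0 h0 t₀ ht) hmono
  rw [heq₁ 0 h0 t₀ ht, heq₂ 0 h0 t₀ ht]
  rw [hp] at hfle ⊢
  have hs : 0 ≤ Real.sqrt (1 + ∑ j, Du₁ 0 t₀ j ^ 2) := Real.sqrt_nonneg _
  nlinarith [mul_le_mul_of_nonneg_right hfle hs]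
end

section
/- Let ψ : ℝ → ℝ be twice continuously differentiable, let J ≥ 1 and m ≥ 1, and define Φ(ỹ, z) = (ψ(‖z‖) ι(ỹ), z) ∈ ℝ^{J+1} × ℝ^m for ỹ in the open unit ball of ℝ^J and z ∈ ℝ^m \ {0}, where ι(ỹ) = (ỹ, √(1 − ‖ỹ‖²)) ∈ ℝ^{J+1}. Fix z ≠ 0 and set s = ‖z‖, and let ν = (1 + ψ'(s)²)^{-1/2} (ι(0), −(ψ'(s)/s) z) ∈ ℝ^{J+1} × ℝ^m. Then at the point (ỹ, z) = (0, z): (a) ⟨∂²Φ/∂ỹⁱ∂ỹʲ, ν⟩ = −ψ(s) δᵢⱼ/√(1 + ψ'(s)²) for 1 ≤ i, j ≤ J; (b) ⟨∂²Φ/∂ỹʲ∂z^q, ν⟩ = 0 for 1 ≤ j ≤ J, 1 ≤ q ≤ m; and (c) ⟨∂²Φ/∂z^p∂z^q, ν⟩ = (1 + ψ'(s)²)^{-1/2} (ψ''(s) zᵖ z^q/s² + ψ'(s)(δ_{pq} s² − zᵖ z^q)/s³) for 1 ≤ p, q ≤ m. -/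
open scoped RealInnerProductSpace

/-- The embedding `ỹ ↦ (ỹ, √(1 - ‖ỹ‖²))` of the open unit ball of `ℝ^J` into the unit
sphere of `ℝ^{J+1}`. -/
noncomputable def iotaMap {J : ℕ} (y : EuclideanSpace ℝ (Fin J)) :
    EuclideanSpace ℝ (Fin (J + 1)) :=
  WithLp.toLp 2 (Fin.snoc (y : Fin J → ℝ) (Real.sqrt (1 - ‖y‖ ^ 2)))

/-- The local parametrization `Φ(ỹ, z) = (ψ(‖z‖) ι(ỹ), z)` of the rotationally
symmetric hypersurface `{(ψ(‖z‖) y, z) : y ∈ S^J}`. -/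
noncomputable def PhiMap {J m : ℕ} (ψ : ℝ → ℝ)
    (p : EuclideanSpace ℝ (Fin J) × EuclideanSpace ℝ (Fin m)) :
    EuclideanSpace ℝ (Fin (J + 1)) × EuclideanSpace ℝ (Fin m) :=
  (ψ ‖p.2‖ • iotaMap p.1, p.2)

variable {F : Type*} [NormedAddCommGroup F] [InnerProductSpace ℝ F]

theorem hasFDerivAt_norm_of_ne {x : F} (hx : x ≠ 0) :
    HasFDerivAt (fun y : F => ‖y‖) (‖x‖⁻¹ • innerSL ℝ x) x := by
  have hx0 : (0:ℝ) < ‖x‖ := norm_pos_iff.mpr hx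
  have h1 : HasFDerivAt (fun y : F => ‖y‖ ^ 2) (2 • innerSL ℝ x) x :=
    (hasStrictFDerivAt_norm_sq x).hasFDerivAt
  have h2 := (Real.hasDerivAt_sqrt (by positivity : ‖x‖^2 ≠ 0)).comp_hasFDerivAt x h1
  have hfun : (fun y : F => ‖y‖) = fun y => Real.sqrt (‖y‖^2) := by
    funext y; rw [Real.sqrt_sq (norm_nonneg y)]
  rw [hfun]
  refine h2.congr_fderiv ?_
  rw [Real.sqrt_sq hx0.le]
  ext v
  simp only [ContinuousLinearMap.smul_apply, ContinuousLinearMap.smul_apply,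
    innerSL_apply_apply, smul_eq_mul]
  field_simp
  ring

theorem hasFDerivAt_sqrt_one_sub_normSq {y : F} (hy : ‖y‖ < 1) :
    HasFDerivAt (fun w : F => Real.sqrt (1 - ‖w‖ ^ 2))
      (-(Real.sqrt (1 - ‖y‖ ^ 2))⁻¹ • innerSL ℝ y) y := by
  have h0 : (0:ℝ) < 1 - ‖y‖ ^ 2 := by
    have := pow_lt_one₀ (norm_nonneg y) hy (two_ne_zero)
    linarith
  have h1 : HasFDerivAt (fun w : F => 1 - ‖w‖ ^ 2) (-(2 • innerSL ℝ y)) y :=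
    ((hasStrictFDerivAt_norm_sq y).hasFDerivAt).const_sub 1
  have h2 := (Real.hasDerivAt_sqrt h0.ne').comp_hasFDerivAt y h1
  refine h2.congr_fderiv ?_
  ext v
  have hsq : Real.sqrt (1 - ‖y‖ ^ 2) ≠ 0 := by positivity
  simp only [ContinuousLinearMap.smul_apply, ContinuousLinearMap.neg_apply,
    innerSL_apply_apply, smul_eq_mul]
  field_simp
  ring


theorem iotaMap_zero {J : ℕ} :
    iotaMap (0 : EuclideanSpace ℝ (Fin J)) = EuclideanSpace.single (Fin.last J) 1 := by
  ext k
  refine Fin.lastCases ?_ (fun i => ?_) k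
  · simp [iotaMap, EuclideanSpace.single_apply]
  · simp [iotaMap, Fin.snoc_castSucc, EuclideanSpace.single_apply,
      (Fin.castSucc_lt_last i).ne]

theorem inner_iotaMap_zero {J : ℕ} (y : EuclideanSpace ℝ (Fin J)) :
    ⟪iotaMap (0 : EuclideanSpace ℝ (Fin J)), iotaMap y⟫ = Real.sqrt (1 - ‖y‖ ^ 2) := by
  rw [iotaMap_zero, EuclideanSpace.inner_single_left]
  simp [iotaMap]

theorem contDiffAt_iotaMap {J : ℕ} {y : EuclideanSpace ℝ (Fin J)} (hy : ‖y‖ < 1) :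
    ContDiffAt ℝ 2 (iotaMap (J := J)) y := by
  have h0 : (0:ℝ) < 1 - ‖y‖ ^ 2 := by
    have := pow_lt_one₀ (norm_nonneg y) hy (two_ne_zero)
    linarith
  rw [contDiffAt_piLp 2]
  intro k
  refine Fin.lastCases ?_ (fun i => ?_) k
  · simp only [iotaMap, Fin.snoc_last]
    exact (Real.contDiffAt_sqrt h0.ne').comp y
      (contDiffAt_const.sub (contDiffAt_id.norm_sq ℝ))
  · simp only [iotaMap, Fin.snoc_castSucc]
    exact (contDiffAt_piLp 2).mp contDiffAt_id i


set_option maxHeartbeats 2000000 in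
theorem key_formula {J m : ℕ} (ψ : ℝ → ℝ) (hψ : ContDiff ℝ 2 ψ)
    (z : EuclideanSpace ℝ (Fin m)) (hz : z ≠ 0) (c : ℝ)
    (ν : EuclideanSpace ℝ (Fin (J + 1)) × EuclideanSpace ℝ (Fin m))
    (hν1 : ν.1 = c • iotaMap (0 : EuclideanSpace ℝ (Fin J)))
    (u v : EuclideanSpace ℝ (Fin J) × EuclideanSpace ℝ (Fin m)) :
    ⟪(fderiv ℝ (fderiv ℝ (PhiMap ψ (J := J) (m := m))) (0, z) u v).1, ν.1⟫ +
      ⟪(fderiv ℝ (fderiv ℝ (PhiMap ψ (J := J) (m := m))) (0, z) u v).2, ν.2⟫ =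
    c * (-(ψ ‖z‖) * ⟪u.1, v.1⟫ + (deriv ψ ‖z‖ / ‖z‖) * ⟪u.2, v.2⟫ +
      (deriv (deriv ψ) ‖z‖ / ‖z‖ ^ 2 - deriv ψ ‖z‖ / ‖z‖ ^ 3) * (⟪z, u.2⟫ * ⟪z, v.2⟫)) := by
  have hs : (0 : ℝ) < ‖z‖ := norm_pos_iff.mpr hz
  set x₀ : EuclideanSpace ℝ (Fin J) × EuclideanSpace ℝ (Fin m) := (0, z) with hx₀
  set L : (EuclideanSpace ℝ (Fin (J + 1)) × EuclideanSpace ℝ (Fin m)) →L[ℝ] ℝ :=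
    (innerSL ℝ ν.1).comp (ContinuousLinearMap.fst ℝ (EuclideanSpace ℝ (Fin (J + 1))) (EuclideanSpace ℝ (Fin m))) +
      (innerSL ℝ ν.2).comp (ContinuousLinearMap.snd ℝ (EuclideanSpace ℝ (Fin (J + 1))) (EuclideanSpace ℝ (Fin m))) with hL
  set g : EuclideanSpace ℝ (Fin J) × EuclideanSpace ℝ (Fin m) → ℝ :=
    fun p => c * (ψ ‖p.2‖ * Real.sqrt (1 - ‖p.1‖ ^ 2)) + ⟪ν.2, p.2⟫ with hg
  -- L ∘ Φ = g
  have hLΦ : ⇑L ∘ (PhiMap ψ (J := J) (m := m)) = g := by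
    funext p
    simp only [hL, hg, Function.comp_apply, PhiMap, ContinuousLinearMap.add_apply,
      ContinuousLinearMap.comp_apply, ContinuousLinearMap.coe_fst',
      ContinuousLinearMap.coe_snd', innerSL_apply_apply]
    rw [hν1, real_inner_smul_left, real_inner_smul_right, inner_iotaMap_zero]
    try ring
  -- smoothness of Φ at x₀
  have hΦ : ContDiffAt ℝ 2 (PhiMap ψ (J := J) (m := m)) x₀ := by
    have h1 : ContDiffAt ℝ 2 (fun p : EuclideanSpace ℝ (Fin J) × EuclideanSpace ℝ (Fin m) => ψ ‖p.2‖) x₀ :=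
      (hψ.contDiffAt.comp x₀ ((contDiffAt_norm ℝ hz).comp x₀ contDiffAt_snd))
    have h2 : ContDiffAt ℝ 2 (fun p : EuclideanSpace ℝ (Fin J) × EuclideanSpace ℝ (Fin m) => iotaMap p.1) x₀ :=
      (contDiffAt_iotaMap (by simp [hx₀])).comp x₀ contDiffAt_fst
    exact (h1.smul h2).prodMk contDiffAt_snd
  have hg2 : ContDiffAt ℝ 2 g x₀ := by
    rw [← hLΦ]
    exact L.contDiff.contDiffAt.comp x₀ hΦ
  -- step A : LHS = D² g
  have hev : ∀ᶠ p in nhds x₀, DifferentiableAt ℝ (PhiMap ψ (J := J) (m := m)) p :=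
    (hΦ.eventually (by simp)).mono fun p hp => hp.differentiableAt two_ne_zero
  have hfg : fderiv ℝ g =ᶠ[nhds x₀]
      fun p => L.comp (fderiv ℝ (PhiMap ψ (J := J) (m := m)) p) := by
    filter_upwards [hev] with p hp
    rw [← hLΦ, fderiv_comp p L.differentiableAt hp, ContinuousLinearMap.fderiv]
  have hFd : DifferentiableAt ℝ (fderiv ℝ (PhiMap ψ (J := J) (m := m))) x₀ :=
    (hΦ.fderiv_right (le_refl 2)).differentiableAt one_ne_zero
  have hA : fderiv ℝ (fderiv ℝ g) x₀ u v =
      ⟪(fderiv ℝ (fderiv ℝ (PhiMap ψ (J := J) (m := m))) (0, z) u v).1, ν.1⟫ +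
        ⟪(fderiv ℝ (fderiv ℝ (PhiMap ψ (J := J) (m := m))) (0, z) u v).2, ν.2⟫ := by
    rw [hfg.fderiv_eq]
    have heq : (fun p => L.comp (fderiv ℝ (PhiMap ψ (J := J) (m := m)) p)) =
        (⇑(ContinuousLinearMap.compL ℝ (EuclideanSpace ℝ (Fin J) × EuclideanSpace ℝ (Fin m)) (EuclideanSpace ℝ (Fin (J + 1)) × EuclideanSpace ℝ (Fin m)) ℝ L)) ∘
          (fderiv ℝ (PhiMap ψ (J := J) (m := m))) := rfl
    rw [heq, fderiv_comp x₀ (ContinuousLinearMap.differentiableAt _) hFd,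
      ContinuousLinearMap.fderiv]
    simp only [hL, ContinuousLinearMap.comp_apply, ContinuousLinearMap.compL_apply,
      ContinuousLinearMap.add_apply, ContinuousLinearMap.coe_fst',
      ContinuousLinearMap.coe_snd', innerSL_apply_apply, hx₀]
    rw [real_inner_comm (ν.1), real_inner_comm (ν.2)]
  rw [← hA]
  -- reduce to directional second derivative of the scalar function g
  have hgd : DifferentiableAt ℝ (fderiv ℝ g) x₀ :=
    (hg2.fderiv_right (le_refl 2)).differentiableAt one_ne_zero
  have hC : fderiv ℝ (fderiv ℝ g) x₀ u v = fderiv ℝ (fun p => fderiv ℝ g p v) x₀ u := by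
    rw [fderiv_clm_apply hgd (differentiableAt_const v)]
    simp
  rw [hC]
  -- neighbourhood facts
  have hnb : ∀ᶠ p : EuclideanSpace ℝ (Fin J) × EuclideanSpace ℝ (Fin m) in nhds x₀,
      ‖p.1‖ < 1 ∧ p.2 ≠ 0 := by
    have hO : IsOpen {p : EuclideanSpace ℝ (Fin J) × EuclideanSpace ℝ (Fin m) |
        ‖p.1‖ < 1 ∧ p.2 ≠ 0} :=
      (isOpen_lt continuous_fst.norm continuous_const).inter
        (isOpen_compl_singleton.preimage continuous_snd)
    have hmem : x₀ ∈ {p : EuclideanSpace ℝ (Fin J) × EuclideanSpace ℝ (Fin m) |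
        ‖p.1‖ < 1 ∧ p.2 ≠ 0} := ⟨by simp [hx₀], hz⟩
    exact Filter.eventually_of_mem (hO.mem_nhds hmem) fun p hp => hp
  -- explicit formula for the first derivative of g in direction v
  have hDg : (fun p => fderiv ℝ g p v) =ᶠ[nhds x₀]
      (fun p : EuclideanSpace ℝ (Fin J) × EuclideanSpace ℝ (Fin m) =>
        c * (ψ ‖p.2‖ * (-(Real.sqrt (1 - ‖p.1‖ ^ 2))⁻¹ * ⟪v.1, p.1⟫) +
          Real.sqrt (1 - ‖p.1‖ ^ 2) * (deriv ψ ‖p.2‖ * (‖p.2‖⁻¹ * ⟪v.2, p.2⟫))) +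
          ⟪ν.2, v.2⟫) := by
    filter_upwards [hnb] with p hp
    obtain ⟨hp1, hp2⟩ := hp
    have n2 : HasFDerivAt (fun q : EuclideanSpace ℝ (Fin J) × EuclideanSpace ℝ (Fin m) => ‖q.2‖)
        ((‖p.2‖⁻¹ • innerSL ℝ p.2).comp
          (ContinuousLinearMap.snd ℝ (EuclideanSpace ℝ (Fin J)) (EuclideanSpace ℝ (Fin m)))) p :=
      (hasFDerivAt_norm_of_ne hp2).comp p hasFDerivAt_snd
    have hψp : HasFDerivAt
        (fun q : EuclideanSpace ℝ (Fin J) × EuclideanSpace ℝ (Fin m) => ψ ‖q.2‖)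
        (deriv ψ ‖p.2‖ • ((‖p.2‖⁻¹ • innerSL ℝ p.2).comp
          (ContinuousLinearMap.snd ℝ (EuclideanSpace ℝ (Fin J)) (EuclideanSpace ℝ (Fin m))))) p :=
      (((hψ.differentiable two_ne_zero) ‖p.2‖).hasDerivAt).comp_hasFDerivAt p n2
    have h1p : HasFDerivAt
        (fun q : EuclideanSpace ℝ (Fin J) × EuclideanSpace ℝ (Fin m) =>
          Real.sqrt (1 - ‖q.1‖ ^ 2))
        ((-(Real.sqrt (1 - ‖p.1‖ ^ 2))⁻¹ • innerSL ℝ p.1).comp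
          (ContinuousLinearMap.fst ℝ (EuclideanSpace ℝ (Fin J)) (EuclideanSpace ℝ (Fin m)))) p :=
      (hasFDerivAt_sqrt_one_sub_normSq hp1).comp p hasFDerivAt_fst
    have hwp : HasFDerivAt
        (fun q : EuclideanSpace ℝ (Fin J) × EuclideanSpace ℝ (Fin m) => (⟪ν.2, q.2⟫ : ℝ))
        ((innerSL ℝ ν.2).comp
          (ContinuousLinearMap.snd ℝ (EuclideanSpace ℝ (Fin J)) (EuclideanSpace ℝ (Fin m)))) p :=
      ((innerSL ℝ ν.2).comp
        (ContinuousLinearMap.snd ℝ (EuclideanSpace ℝ (Fin J)) (EuclideanSpace ℝ (Fin m)))).hasFDerivAt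
    have Hg : HasFDerivAt g
        (c • (ψ ‖p.2‖ • ((-(Real.sqrt (1 - ‖p.1‖ ^ 2))⁻¹ • innerSL ℝ p.1).comp
            (ContinuousLinearMap.fst ℝ (EuclideanSpace ℝ (Fin J)) (EuclideanSpace ℝ (Fin m)))) +
          Real.sqrt (1 - ‖p.1‖ ^ 2) • (deriv ψ ‖p.2‖ • ((‖p.2‖⁻¹ • innerSL ℝ p.2).comp
            (ContinuousLinearMap.snd ℝ (EuclideanSpace ℝ (Fin J)) (EuclideanSpace ℝ (Fin m)))))) +
          (innerSL ℝ ν.2).comp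
            (ContinuousLinearMap.snd ℝ (EuclideanSpace ℝ (Fin J)) (EuclideanSpace ℝ (Fin m)))) p :=
      ((hψp.mul h1p).const_mul c).add hwp
    rw [Hg.fderiv]
    simp only [ContinuousLinearMap.add_apply, ContinuousLinearMap.smul_apply,
      ContinuousLinearMap.comp_apply, ContinuousLinearMap.coe_fst', ContinuousLinearMap.coe_snd',
      innerSL_apply_apply, smul_eq_mul]
    rw [real_inner_comm p.1 v.1, real_inner_comm p.2 v.2]
    try ring
  -- second derivative: differentiate the explicit formula at x₀
  have h01 : ‖(0 : EuclideanSpace ℝ (Fin J))‖ < 1 := by simp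
  have hψ1 : ContDiff ℝ 1 (deriv ψ) := by
    have h := contDiff_succ_iff_deriv (𝕜 := ℝ) (n := 1) (f := ψ)
    rw [show ((1 : WithTop ℕ∞) + 1) = 2 by norm_num] at h
    exact (h.mp hψ).2.2
  have n2 : HasFDerivAt
      (fun q : EuclideanSpace ℝ (Fin J) × EuclideanSpace ℝ (Fin m) => ‖q.2‖)
      ((‖z‖⁻¹ • innerSL ℝ z).comp
        (ContinuousLinearMap.snd ℝ (EuclideanSpace ℝ (Fin J)) (EuclideanSpace ℝ (Fin m)))) x₀ :=
    (hasFDerivAt_norm_of_ne hz).comp x₀ hasFDerivAt_snd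
  have hψp : HasFDerivAt
      (fun q : EuclideanSpace ℝ (Fin J) × EuclideanSpace ℝ (Fin m) => ψ ‖q.2‖)
      (deriv ψ ‖z‖ • ((‖z‖⁻¹ • innerSL ℝ z).comp
        (ContinuousLinearMap.snd ℝ (EuclideanSpace ℝ (Fin J)) (EuclideanSpace ℝ (Fin m))))) x₀ :=
    (((hψ.differentiable two_ne_zero) ‖z‖).hasDerivAt).comp_hasFDerivAt x₀ n2
  have t2 : HasFDerivAt
      (fun q : EuclideanSpace ℝ (Fin J) × EuclideanSpace ℝ (Fin m) =>
        Real.sqrt (1 - ‖q.1‖ ^ 2))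
      ((-(Real.sqrt (1 - ‖(0 : EuclideanSpace ℝ (Fin J))‖ ^ 2))⁻¹ •
          innerSL ℝ (0 : EuclideanSpace ℝ (Fin J))).comp
        (ContinuousLinearMap.fst ℝ (EuclideanSpace ℝ (Fin J)) (EuclideanSpace ℝ (Fin m)))) x₀ :=
    (hasFDerivAt_sqrt_one_sub_normSq h01).comp (f := Prod.fst) x₀ hasFDerivAt_fst
  have t3 : HasFDerivAt
      (fun q : EuclideanSpace ℝ (Fin J) × EuclideanSpace ℝ (Fin m) =>
        -(Real.sqrt (1 - ‖q.1‖ ^ 2))⁻¹)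
      (-((-(Real.sqrt (1 - ‖(0 : EuclideanSpace ℝ (Fin J))‖ ^ 2) ^ 2)⁻¹) •
        ((-(Real.sqrt (1 - ‖(0 : EuclideanSpace ℝ (Fin J))‖ ^ 2))⁻¹ •
            innerSL ℝ (0 : EuclideanSpace ℝ (Fin J))).comp
          (ContinuousLinearMap.fst ℝ (EuclideanSpace ℝ (Fin J)) (EuclideanSpace ℝ (Fin m)))))) x₀ :=
    ((hasDerivAt_inv
      (by simp : Real.sqrt (1 - ‖(0 : EuclideanSpace ℝ (Fin J))‖ ^ 2) ≠ 0)).comp_hasFDerivAt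
        x₀ t2).neg
  have t4 : HasFDerivAt
      (fun q : EuclideanSpace ℝ (Fin J) × EuclideanSpace ℝ (Fin m) => (⟪v.1, q.1⟫ : ℝ))
      ((innerSL ℝ v.1).comp
        (ContinuousLinearMap.fst ℝ (EuclideanSpace ℝ (Fin J)) (EuclideanSpace ℝ (Fin m)))) x₀ :=
    ((innerSL ℝ v.1).comp
      (ContinuousLinearMap.fst ℝ (EuclideanSpace ℝ (Fin J)) (EuclideanSpace ℝ (Fin m)))).hasFDerivAt
  have t5 : HasFDerivAt
      (fun q : EuclideanSpace ℝ (Fin J) × EuclideanSpace ℝ (Fin m) => deriv ψ ‖q.2‖)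
      (deriv (deriv ψ) ‖z‖ • ((‖z‖⁻¹ • innerSL ℝ z).comp
        (ContinuousLinearMap.snd ℝ (EuclideanSpace ℝ (Fin J)) (EuclideanSpace ℝ (Fin m))))) x₀ :=
    by have h5 := ((hψ1.differentiable one_ne_zero) ‖z‖).hasDerivAt
       exact h5.comp_hasFDerivAt x₀ n2
  have t6 : HasFDerivAt
      (fun q : EuclideanSpace ℝ (Fin J) × EuclideanSpace ℝ (Fin m) => ‖q.2‖⁻¹)
      ((-(‖z‖ ^ 2)⁻¹) • ((‖z‖⁻¹ • innerSL ℝ z).comp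
        (ContinuousLinearMap.snd ℝ (EuclideanSpace ℝ (Fin J)) (EuclideanSpace ℝ (Fin m))))) x₀ :=
    (hasDerivAt_inv hs.ne').comp_hasFDerivAt x₀ n2
  have t7 : HasFDerivAt
      (fun q : EuclideanSpace ℝ (Fin J) × EuclideanSpace ℝ (Fin m) => (⟪v.2, q.2⟫ : ℝ))
      ((innerSL ℝ v.2).comp
        (ContinuousLinearMap.snd ℝ (EuclideanSpace ℝ (Fin J)) (EuclideanSpace ℝ (Fin m)))) x₀ :=
    ((innerSL ℝ v.2).comp
      (ContinuousLinearMap.snd ℝ (EuclideanSpace ℝ (Fin J)) (EuclideanSpace ℝ (Fin m)))).hasFDerivAt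
  have HG := (((hψp.mul (t3.mul t4)).add (t2.mul (t5.mul (t6.mul t7)))).const_mul c).add_const
    (⟪ν.2, v.2⟫ : ℝ)
  have HG' := HG.congr_of_eventuallyEq hDg
  rw [HG'.fderiv]
  simp only [ContinuousLinearMap.add_apply, ContinuousLinearMap.smul_apply,
    ContinuousLinearMap.comp_apply, ContinuousLinearMap.coe_fst', ContinuousLinearMap.coe_snd',
    ContinuousLinearMap.neg_apply, innerSL_apply_apply, smul_eq_mul, hx₀, norm_zero,
    inner_zero_left, mul_zero, zero_mul, add_zero, zero_add, neg_zero, sub_zero, Pi.mul_apply,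
    inner_zero_right]
  rw [real_inner_comm v.1 u.1, real_inner_comm v.2 u.2, real_inner_comm v.2 z]
  field_simp
  ring

/-- Second fundamental form entries of the rotationally symmetric hypersurface at points
with `ỹ = 0`: the inner products of the second partial derivatives of `Φ` with the unit
normal `ν` are given by the block formulas (a), (b), (c). The inner product on the
product space is `⟪u.1, v.1⟫ + ⟪u.2, v.2⟫`. -/
theorem cappedCylinder_second_derivatives {J m : ℕ} (hJ : 1 ≤ J) (hm : 1 ≤ m)
    (ψ : ℝ → ℝ) (hψ : ContDiff ℝ 2 ψ)
    (z : EuclideanSpace ℝ (Fin m)) (hz : z ≠ 0) :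
    let s := ‖z‖
    let ν : EuclideanSpace ℝ (Fin (J + 1)) × EuclideanSpace ℝ (Fin m) :=
      (Real.sqrt (1 + deriv ψ s ^ 2))⁻¹ •
        ((iotaMap (0 : EuclideanSpace ℝ (Fin J)), -(deriv ψ s / s) • z))
    let D2 := fderiv ℝ (fderiv ℝ (PhiMap ψ (J := J) (m := m))) (0, z)
    -- (a)  ⟨∂²Φ/∂ỹⁱ∂ỹʲ, ν⟩ = -ψ(s) δᵢⱼ / √(1 + ψ'(s)²)
    (∀ i j : Fin J,
      ⟪(D2 (EuclideanSpace.single i 1, 0) (EuclideanSpace.single j 1, 0)).1, ν.1⟫ +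
        ⟪(D2 (EuclideanSpace.single i 1, 0) (EuclideanSpace.single j 1, 0)).2, ν.2⟫ =
      -(ψ s) * (if i = j then (1 : ℝ) else 0) / Real.sqrt (1 + deriv ψ s ^ 2)) ∧
    -- (b)  ⟨∂²Φ/∂ỹʲ∂z^q, ν⟩ = 0
    (∀ j : Fin J, ∀ q : Fin m,
      ⟪(D2 (EuclideanSpace.single j 1, 0) (0, EuclideanSpace.single q 1)).1, ν.1⟫ +
        ⟪(D2 (EuclideanSpace.single j 1, 0) (0, EuclideanSpace.single q 1)).2, ν.2⟫ = 0) ∧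
    -- (c)  ⟨∂²Φ/∂z^p∂z^q, ν⟩
    (∀ p q : Fin m,
      ⟪(D2 (0, EuclideanSpace.single p 1) (0, EuclideanSpace.single q 1)).1, ν.1⟫ +
        ⟪(D2 (0, EuclideanSpace.single p 1) (0, EuclideanSpace.single q 1)).2, ν.2⟫ =
      (Real.sqrt (1 + deriv ψ s ^ 2))⁻¹ *
        (deriv (deriv ψ) s * z p * z q / s ^ 2 +
          deriv ψ s * ((if p = q then (1 : ℝ) else 0) * s ^ 2 - z p * z q) / s ^ 3)) := by
  intro s ν D2
  have hs : (0 : ℝ) < ‖z‖ := norm_pos_iff.mpr hz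
  refine ⟨fun i j => ?_, fun j q => ?_, fun p q => ?_⟩
  · exact (key_formula ψ hψ z hz ((Real.sqrt (1 + deriv ψ ‖z‖ ^ 2))⁻¹)
      ((Real.sqrt (1 + deriv ψ ‖z‖ ^ 2))⁻¹ •
        ((iotaMap (0 : EuclideanSpace ℝ (Fin J)), -(deriv ψ ‖z‖ / ‖z‖) • z))) rfl
      (EuclideanSpace.single i 1, 0) (EuclideanSpace.single j 1, 0)).trans (by
        show (Real.sqrt (1 + deriv ψ ‖z‖ ^ 2))⁻¹ *
            (-(ψ ‖z‖) * ⟪(EuclideanSpace.single i 1 : EuclideanSpace ℝ (Fin J)),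
                (EuclideanSpace.single j 1 : EuclideanSpace ℝ (Fin J))⟫ +
              (deriv ψ ‖z‖ / ‖z‖) * ⟪(0 : EuclideanSpace ℝ (Fin m)), (0 : EuclideanSpace ℝ (Fin m))⟫ +
              (deriv (deriv ψ) ‖z‖ / ‖z‖ ^ 2 - deriv ψ ‖z‖ / ‖z‖ ^ 3) *
                (⟪z, (0 : EuclideanSpace ℝ (Fin m))⟫ * ⟪z, (0 : EuclideanSpace ℝ (Fin m))⟫)) =
          -(ψ ‖z‖) * (if i = j then (1 : ℝ) else 0) / Real.sqrt (1 + deriv ψ ‖z‖ ^ 2)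
        rw [EuclideanSpace.inner_single_left]
        simp only [inner_zero_right, mul_zero, zero_mul, add_zero, map_one, one_mul,
          EuclideanSpace.single_apply]
        rw [div_eq_inv_mul])
  · exact (key_formula ψ hψ z hz ((Real.sqrt (1 + deriv ψ ‖z‖ ^ 2))⁻¹)
      ((Real.sqrt (1 + deriv ψ ‖z‖ ^ 2))⁻¹ •
        ((iotaMap (0 : EuclideanSpace ℝ (Fin J)), -(deriv ψ ‖z‖ / ‖z‖) • z))) rfl
      (EuclideanSpace.single j 1, 0) (0, EuclideanSpace.single q 1)).trans (by
        show (Real.sqrt (1 + deriv ψ ‖z‖ ^ 2))⁻¹ *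
            (-(ψ ‖z‖) * ⟪(EuclideanSpace.single j 1 : EuclideanSpace ℝ (Fin J)),
                (0 : EuclideanSpace ℝ (Fin J))⟫ +
              (deriv ψ ‖z‖ / ‖z‖) * ⟪(0 : EuclideanSpace ℝ (Fin m)),
                (EuclideanSpace.single q 1 : EuclideanSpace ℝ (Fin m))⟫ +
              (deriv (deriv ψ) ‖z‖ / ‖z‖ ^ 2 - deriv ψ ‖z‖ / ‖z‖ ^ 3) *
                (⟪z, (0 : EuclideanSpace ℝ (Fin m))⟫ *
                  ⟪z, (EuclideanSpace.single q 1 : EuclideanSpace ℝ (Fin m))⟫)) = 0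
        simp)
  · exact (key_formula ψ hψ z hz ((Real.sqrt (1 + deriv ψ ‖z‖ ^ 2))⁻¹)
      ((Real.sqrt (1 + deriv ψ ‖z‖ ^ 2))⁻¹ •
        ((iotaMap (0 : EuclideanSpace ℝ (Fin J)), -(deriv ψ ‖z‖ / ‖z‖) • z))) rfl
      (0, EuclideanSpace.single p 1) (0, EuclideanSpace.single q 1)).trans (by
        show (Real.sqrt (1 + deriv ψ ‖z‖ ^ 2))⁻¹ *
            (-(ψ ‖z‖) * ⟪(0 : EuclideanSpace ℝ (Fin J)), (0 : EuclideanSpace ℝ (Fin J))⟫ +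
              (deriv ψ ‖z‖ / ‖z‖) * ⟪(EuclideanSpace.single p 1 : EuclideanSpace ℝ (Fin m)),
                (EuclideanSpace.single q 1 : EuclideanSpace ℝ (Fin m))⟫ +
              (deriv (deriv ψ) ‖z‖ / ‖z‖ ^ 2 - deriv ψ ‖z‖ / ‖z‖ ^ 3) *
                (⟪z, (EuclideanSpace.single p 1 : EuclideanSpace ℝ (Fin m))⟫ *
                  ⟪z, (EuclideanSpace.single q 1 : EuclideanSpace ℝ (Fin m))⟫)) =
          (Real.sqrt (1 + deriv ψ ‖z‖ ^ 2))⁻¹ *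
            (deriv (deriv ψ) ‖z‖ * z p * z q / ‖z‖ ^ 2 +
              deriv ψ ‖z‖ * ((if p = q then (1 : ℝ) else 0) * ‖z‖ ^ 2 - z p * z q) / ‖z‖ ^ 3)
        rw [EuclideanSpace.inner_single_left, EuclideanSpace.inner_single_right,
          EuclideanSpace.inner_single_right]
        simp only [inner_zero_right, mul_zero, zero_mul, add_zero, zero_add, map_one, one_mul,
          EuclideanSpace.single_apply, conj_trivial, mul_one]
        have hzne : ‖z‖ ≠ 0 := hs.ne'
        by_cases hpq : p = q
        · simp only [if_pos hpq]
          field_simp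
          ring
        · simp only [if_neg hpq]
          field_simp
          ring)
end

section
/- Let E and F be real inner product spaces and let K ⊆ E × F be a convex set. Let 0 < B and A ≥ 2B, and suppose that (y, 0) ∈ K for every y ∈ E with ‖y‖ ≤ B, and (0, z) ∈ K for every z ∈ F with ‖z‖ ≤ A. Then for every z₀ ∈ F with ‖z₀‖ = A/2, the closed ball in E × F of radius B/4 centered at (0, z₀) is contained in K. -/
/-- Interior-ball construction on the axis: if a convex set `K ⊆ E × F` contains
`(y, 0)` for all `‖y‖ ≤ B` and `(0, z)` for all `‖z‖ ≤ A`, with `0 < B` and `A ≥ 2B`,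
then for every `z₀` with `‖z₀‖ = A/2` the closed ball of radius `B/4` centered at
`(0, z₀)` (for the product inner-product norm, `‖(u,v)‖² = ‖u‖² + ‖v‖²`) is contained
in `K`. -/
theorem interior_ball_on_axis {E F : Type*}
    [NormedAddCommGroup E] [InnerProductSpace ℝ E]
    [NormedAddCommGroup F] [InnerProductSpace ℝ F]
    (K : Set (E × F)) (hK : Convex ℝ K)
    (A B : ℝ) (hB : 0 < B) (hA : 2 * B ≤ A)
    (hEin : ∀ y : E, ‖y‖ ≤ B → ((y, 0) : E × F) ∈ K)
    (hFin : ∀ z : F, ‖z‖ ≤ A → ((0, z) : E × F) ∈ K)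
    (z₀ : F) (hz₀ : ‖z₀‖ = A / 2) :
    ∀ p : E × F, ‖p.1‖ ^ 2 + ‖p.2 - z₀‖ ^ 2 ≤ (B / 4) ^ 2 → p ∈ K := by
  rintro ⟨u, v⟩ hp
  simp only at hp
  have hA0 : 0 < A := by linarith
  have hu : ‖u‖ ≤ B / 4 := by
    nlinarith [sq_nonneg ‖v - z₀‖, norm_nonneg u]
  have hvz : ‖v - z₀‖ ≤ B / 4 := by
    nlinarith [sq_nonneg ‖u‖, norm_nonneg (v - z₀)]
  have habs := abs_norm_sub_norm_le v z₀
  rw [abs_le] at habs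
  have hvub : ‖v‖ ≤ A / 2 + B / 4 := by linarith [habs.2]
  have hvlb : A / 2 - B / 4 ≤ ‖v‖ := by linarith [habs.1]
  have hv0 : 0 < ‖v‖ := by linarith
  set t : ℝ := ‖v‖ / A with ht
  have ht0 : 0 < t := div_pos hv0 hA0
  have ht1 : t ≤ 5 / 8 := by
    rw [div_le_iff₀ hA0]; nlinarith
  have h1t : (3 : ℝ) / 8 ≤ 1 - t := by linarith
  have h1t0 : (0 : ℝ) < 1 - t := by linarith
  have ha : ‖(1 - t)⁻¹ • u‖ ≤ B := by
    rw [norm_smul, norm_inv, Real.norm_eq_abs, abs_of_pos h1t0]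
    rw [inv_mul_le_iff₀ h1t0]
    nlinarith
  have hb : ‖(A / ‖v‖) • v‖ ≤ A := by
    rw [norm_smul, Real.norm_eq_abs, abs_of_pos (div_pos hA0 hv0)]
    rw [div_mul_cancel₀ _ (ne_of_gt hv0)]
  have hmem := hK (hEin _ ha) (hFin _ hb) (le_of_lt h1t0) (le_of_lt ht0)
    (by ring)
  have heq : (1 - t) • (((1 - t)⁻¹ • u, 0) : E × F) + t • ((0, (A / ‖v‖) • v) : E × F)
      = (u, v) := by
    ext
    · simp [smul_smul, mul_inv_cancel₀ (ne_of_gt h1t0)]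
    · simp only [Prod.snd_add, Prod.smul_snd, smul_zero, zero_add, smul_smul]
      rw [ht, div_mul_div_comm]
      rw [show ‖v‖ * A / (A * ‖v‖) = 1 by field_simp, one_smul]
  rw [heq] at hmem
  exact hmem
end
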